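/- Let Ω ⊆ ℂⁿ be a bounded domain and let φ be a plurisubharmonic function on Ω. If φ ∈ VMO(Ω), then the Lelong number ν_φ(a) = 0 for every a ∈ Ω. -/

import Mathlib

open MeasureTheory Metric Filter Topology
open scoped ENNReal NNReal

noncomputable section

variable {n : ℕ}

/-- `ℂⁿ` with the Euclidean norm. -/
abbrev Cn (n : ℕ) : Type := EuclideanSpace ℂ (Fin n)

noncomputable instance : MeasurableSpace (Cn n) := borel _
instance : BorelSpace (Cn n) := ⟨rfl⟩
noncomputable instance : InnerProductSpace ℝ (Cn n) := InnerProductSpace.complexToReal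

/-- The canonical map `EReal → ℝ≥0∞` sending negative values to `0` and `⊤` to `⊤`. -/
def erealToENNReal (x : EReal) : ℝ≥0∞ := if x = ⊤ then ⊤ else ENNReal.ofReal x.toReal

/-- `φ : U → [-∞, ∞)` is plurisubharmonic on the open set `U ⊆ ℂⁿ`: it is upper
semicontinuous on `U`, not identically `-∞` on any connected component of `U`, and for every
`a ∈ U`, `b ∈ ℂⁿ` and `r > 0` with `{a + λ • b : |λ| ≤ r} ⊆ U` one has
`φ a ≤ (1 / 2π) ∫_0^{2π} φ (a + r e^{iθ} • b) dθ`.  The sub-mean value inequality for the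
`EReal`-valued `φ` is encoded, for every real upper bound `M` of `φ` on the circle, as
`∫_0^{2π} (M - φ(a + r e^{iθ} b)) dθ ≤ 2π (M - φ a)` in `ℝ≥0∞`, which is equivalent to it. -/
def IsPSHOn (φ : Cn n → EReal) (U : Set (Cn n)) : Prop :=
  UpperSemicontinuousOn φ U ∧
  (∀ x ∈ U, ∃ z ∈ connectedComponentIn U x, φ z ≠ ⊥) ∧
  ∀ a ∈ U, ∀ b : Cn n, ∀ r : ℝ, 0 < r →
    (∀ lam : ℂ, ‖lam‖ ≤ r → a + lam • b ∈ U) →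
    ∀ M : ℝ,
      (∀ θ : ℝ, φ (a + ((r : ℂ) * Complex.exp ((θ : ℂ) * Complex.I)) • b) ≤ (M : EReal)) →
      ∫⁻ θ in Set.Ioc (0 : ℝ) (2 * Real.pi),
          erealToENNReal ((M : EReal) - φ (a + ((r : ℂ) * Complex.exp ((θ : ℂ) * Complex.I)) • b))
        ≤ ENNReal.ofReal (2 * Real.pi) * erealToENNReal ((M : EReal) - φ a)

/-- The mean value `φ_{B(z,r)}` of `φ` over the ball `B(z,r)`, w.r.t. Lebesgue measure. -/
def ballAvg (φ : Cn n → EReal) (z : Cn n) (r : ℝ) : ℝ :=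
  ⨍ x in ball z r, (φ x).toReal

/-- The mean oscillation `MO_{B(z,r)}(φ)` of `φ` over the ball `B(z,r)`. -/
def MO (φ : Cn n → EReal) (z : Cn n) (r : ℝ) : ℝ :=
  ⨍ x in ball z r, |(φ x).toReal - ballAvg φ z r|

/-- The set of mean oscillations of `φ` over admissible balls `B(z,r)`, `z ∈ Ω`,
`0 < r ≤ (1/2) · dist(z, ∂Ω)`. -/
def moSet (φ : Cn n → EReal) (Ω : Set (Cn n)) : Set ℝ :=
  {m | ∃ z ∈ Ω, ∃ r : ℝ, 0 < r ∧ r ≤ (1 / 2) * infDist z (frontier Ω) ∧ m = MO φ z r}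

/-- The BMO norm `‖φ‖_{BMO(Ω)}`: the supremum of mean oscillations over all balls `B(z,r)`
with `z ∈ Ω` and `0 < r ≤ (1/2) · dist(z, ∂Ω)`. -/
def bmoNorm (φ : Cn n → EReal) (Ω : Set (Cn n)) : ℝ := sSup (moSet φ Ω)

/-- `φ` is BMO on `Ω`: its BMO norm is finite. -/
def IsBMOOn (φ : Cn n → EReal) (Ω : Set (Cn n)) : Prop := BddAbove (moSet φ Ω)

/-- `φ` is VMO on `Ω`: `φ` is BMO on `Ω` and for every `ε > 0` there is `δ > 0` such that
`MO_{B(z,r)}(φ) < ε` for all `z ∈ Ω` and all `0 < r ≤ min δ ((1/2) · dist(z, ∂Ω))`. -/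
def IsVMOOn (φ : Cn n → EReal) (Ω : Set (Cn n)) : Prop :=
  IsBMOOn φ Ω ∧
  ∀ ε : ℝ, 0 < ε → ∃ δ : ℝ, 0 < δ ∧ ∀ z ∈ Ω, ∀ r : ℝ, 0 < r →
    r ≤ min δ ((1 / 2) * infDist z (frontier Ω)) → MO φ z r < ε

/-- The Lelong number `ν_φ(a) = lim_{r → 0⁺} (sup_{B(a,r)} φ) / log r`. -/
def lelong (φ : Cn n → EReal) (a : Cn n) : ℝ :=
  limUnder (𝓝[>] (0 : ℝ)) fun r : ℝ => (⨆ z ∈ ball a r, φ z).toReal / Real.log r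

open Set

section AuxLemmas

lemma erealToENNReal_coe (x : ℝ) : erealToENNReal (x : EReal) = ENNReal.ofReal x := by
  simp [erealToENNReal]

lemma measurable_erealToENNRealSub (M : ℝ) :
    Measurable fun e : EReal => erealToENNReal ((M : EReal) - e) := by
  apply EReal.measurable_of_measurable_real
  have : (fun p : ℝ => erealToENNReal ((M : EReal) - (p : EReal)))
      = fun p : ℝ => ENNReal.ofReal (M - p) := by
    funext p; rw [← EReal.coe_sub, erealToENNReal_coe]
  rw [this]
  exact (measurable_const.sub measurable_id).ennreal_ofReal

def rotCn {n : ℕ} (c : ℂ) (hc : c ≠ 0) (hc1 : ‖c‖ = 1) : Cn n ≃ₗᵢ[ℝ] Cn n :=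
  { toLinearEquiv := (LinearEquiv.smulOfNeZero ℂ (Cn n) c hc).restrictScalars ℝ
    norm_map' := fun x => by
      show ‖c • x‖ = ‖x‖
      rw [norm_smul, hc1, one_mul] }

lemma rotCn_apply {n : ℕ} (c : ℂ) (hc : c ≠ 0) (hc1 : ‖c‖ = 1) (x : Cn n) :
    rotCn c hc hc1 x = c • x := rfl

lemma psh_ball_bound {n : ℕ} {Ω : Set (Cn n)} {φ : Cn n → EReal}
    (hmeas : Measurable φ)
    (hsmv : ∀ a ∈ Ω, ∀ b : Cn n, ∀ r : ℝ, 0 < r →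
      (∀ lam : ℂ, ‖lam‖ ≤ r → a + lam • b ∈ Ω) →
      ∀ M : ℝ,
        (∀ θ : ℝ, φ (a + ((r : ℂ) * Complex.exp ((θ : ℂ) * Complex.I)) • b) ≤ (M : EReal)) →
        ∫⁻ θ in Set.Ioc (0 : ℝ) (2 * Real.pi),
            erealToENNReal ((M : EReal) - φ (a + ((r : ℂ) * Complex.exp ((θ : ℂ) * Complex.I)) • b))
          ≤ ENNReal.ofReal (2 * Real.pi) * erealToENNReal ((M : EReal) - φ a))
    {z0 : Cn n} {ρ M : ℝ} (hρ : 0 < ρ) (hz0 : z0 ∈ Ω) (hsub : ball z0 ρ ⊆ Ω)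
    (hM : ∀ x ∈ ball z0 ρ, φ x ≤ (M : EReal)) :
    ∫⁻ x in ball z0 ρ, erealToENNReal ((M : EReal) - φ x) ≤
      volume (ball z0 ρ) * erealToENNReal ((M : EReal) - φ z0) := by
  set F : Cn n → ℝ≥0∞ := fun x => erealToENNReal ((M : EReal) - φ x) with hF
  have hFmeas : Measurable F := (measurable_erealToENNRealSub M).comp hmeas
  set G : ℝ≥0∞ := erealToENNReal ((M : EReal) - φ z0) with hG
  have htrans : ∫⁻ x in ball z0 ρ, F x = ∫⁻ x in ball (0 : Cn n) ρ, F (z0 + x) := by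
    have hmp : MeasurePreserving (fun x : Cn n => z0 + x) volume volume :=
      measurePreserving_add_left volume z0
    have hemb : MeasurableEmbedding (fun x : Cn n => z0 + x) :=
      (Homeomorph.addLeft z0).measurableEmbedding
    have h2 := hmp.setLIntegral_comp_preimage_emb hemb F (ball z0 ρ)
    have hpre : (fun x : Cn n => z0 + x) ⁻¹' ball z0 ρ = ball (0 : Cn n) ρ := by
      ext x
      simp [mem_ball, dist_eq_norm, add_sub_cancel_left]
    rw [hpre] at h2
    exact h2.symm
  have hrot : ∀ θ : ℝ, ∫⁻ x in ball (0 : Cn n) ρ, F (z0 + Complex.exp ((θ : ℂ) * Complex.I) • x)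
      = ∫⁻ x in ball (0 : Cn n) ρ, F (z0 + x) := by
    intro θ
    set c := Complex.exp ((θ : ℂ) * Complex.I) with hc
    have hcne : c ≠ 0 := Complex.exp_ne_zero _
    have hc1 : ‖c‖ = 1 := by
      rw [hc]; exact Complex.norm_exp_ofReal_mul_I θ
    have hmp := (rotCn (n := n) c hcne hc1).measurePreserving
    have hemb : MeasurableEmbedding (rotCn (n := n) c hcne hc1) :=
      (rotCn (n := n) c hcne hc1).toHomeomorph.measurableEmbedding
    have h2 := hmp.setLIntegral_comp_preimage_emb hemb (fun y => F (z0 + y)) (ball (0 : Cn n) ρ)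
    have hpre : (rotCn (n := n) c hcne hc1) ⁻¹' ball (0 : Cn n) ρ = ball (0 : Cn n) ρ := by
      ext x
      simp [rotCn_apply, mem_ball, dist_eq_norm, norm_smul, hc1]
    rw [hpre] at h2
    simpa [rotCn_apply] using h2
  have hpt : ∀ x ∈ ball (0 : Cn n) ρ,
      (∫⁻ θ in Set.Ioc (0 : ℝ) (2 * Real.pi), F (z0 + Complex.exp ((θ : ℂ) * Complex.I) • x))
        ≤ ENNReal.ofReal (2 * Real.pi) * G := by
    intro x hx
    have hxnorm : ‖x‖ < ρ := by simpa [mem_ball, dist_eq_norm] using hx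
    have hdom : ∀ lam : ℂ, ‖lam‖ ≤ (1 : ℝ) → z0 + lam • x ∈ Ω := by
      intro lam hlam
      apply hsub
      simp only [mem_ball, dist_eq_norm, add_sub_cancel_left]
      calc ‖lam • x‖ = ‖lam‖ * ‖x‖ := by rw [norm_smul]
        _ ≤ 1 * ‖x‖ := by
            apply mul_le_mul_of_nonneg_right hlam (norm_nonneg x)
        _ < ρ := by rwa [one_mul]
    have hcirc : ∀ θ : ℝ,
        φ (z0 + (((1 : ℝ) : ℂ) * Complex.exp ((θ : ℂ) * Complex.I)) • x) ≤ (M : EReal) := by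
      intro θ
      apply hM
      simp only [mem_ball, dist_eq_norm, add_sub_cancel_left]
      have : ‖(((1 : ℝ) : ℂ) * Complex.exp ((θ : ℂ) * Complex.I)) • x‖
          = ‖(((1 : ℝ) : ℂ) * Complex.exp ((θ : ℂ) * Complex.I))‖ * ‖x‖ := by
        rw [norm_smul]
      rw [this]
      have habs : ‖(((1 : ℝ) : ℂ) * Complex.exp ((θ : ℂ) * Complex.I))‖ = 1 := by
        simp [Complex.norm_exp_ofReal_mul_I]
      rw [habs, one_mul]
      exact hxnorm
    have h := hsmv z0 hz0 x 1 one_pos hdom M hcirc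
    simpa only [Complex.ofReal_one, one_mul] using h
  have hswap : (∫⁻ x in ball (0 : Cn n) ρ, ∫⁻ θ in Set.Ioc (0 : ℝ) (2 * Real.pi),
        F (z0 + Complex.exp ((θ : ℂ) * Complex.I) • x))
      = ∫⁻ θ in Set.Ioc (0 : ℝ) (2 * Real.pi), ∫⁻ x in ball (0 : Cn n) ρ,
        F (z0 + Complex.exp ((θ : ℂ) * Complex.I) • x) := by
    apply lintegral_lintegral_swap
    apply Measurable.aemeasurable
    have hcont : Continuous fun p : Cn n × ℝ =>
        z0 + Complex.exp ((p.2 : ℂ) * Complex.I) • p.1 := by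
      apply continuous_const.add
      exact ((Complex.continuous_exp.comp
        ((Complex.continuous_ofReal.comp continuous_snd).mul continuous_const)).smul
        continuous_fst)
    exact hFmeas.comp hcont.measurable
  have hvol : volume (Set.Ioc (0 : ℝ) (2 * Real.pi)) = ENNReal.ofReal (2 * Real.pi) := by
    rw [Real.volume_Ioc, sub_zero]
  have key : ENNReal.ofReal (2 * Real.pi) * (∫⁻ x in ball (0 : Cn n) ρ, F (z0 + x))
      ≤ ENNReal.ofReal (2 * Real.pi) * (volume (ball z0 ρ) * G) := by
    calc ENNReal.ofReal (2 * Real.pi) * (∫⁻ x in ball (0 : Cn n) ρ, F (z0 + x))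
        = ∫⁻ _θ in Set.Ioc (0 : ℝ) (2 * Real.pi), (∫⁻ x in ball (0 : Cn n) ρ, F (z0 + x)) := by
          rw [setLIntegral_const, hvol, mul_comm]
      _ = ∫⁻ θ in Set.Ioc (0 : ℝ) (2 * Real.pi), ∫⁻ x in ball (0 : Cn n) ρ,
            F (z0 + Complex.exp ((θ : ℂ) * Complex.I) • x) := by
          apply lintegral_congr
          intro θ
          exact (hrot θ).symm
      _ = ∫⁻ x in ball (0 : Cn n) ρ, ∫⁻ θ in Set.Ioc (0 : ℝ) (2 * Real.pi),
            F (z0 + Complex.exp ((θ : ℂ) * Complex.I) • x) := hswap.symm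
      _ ≤ ∫⁻ _x in ball (0 : Cn n) ρ, (ENNReal.ofReal (2 * Real.pi) * G) :=
          setLIntegral_mono measurable_const hpt
      _ = ENNReal.ofReal (2 * Real.pi) * G * volume (ball (0 : Cn n) ρ) := by
          rw [setLIntegral_const]
      _ = ENNReal.ofReal (2 * Real.pi) * (volume (ball z0 ρ) * G) := by
          rw [Measure.addHaar_ball_center volume z0, mul_assoc, mul_comm G]
  rw [htrans]
  have hne : ENNReal.ofReal (2 * Real.pi) ≠ 0 :=
    (ENNReal.ofReal_pos.2 (by positivity)).ne'
  exact (ENNReal.mul_le_mul_iff_right hne ENNReal.ofReal_ne_top).mp key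

lemma erealToENNReal_top : erealToENNReal ⊤ = ⊤ := by simp [erealToENNReal]

lemma coe_sub_eq_top_iff {x : ℝ} {e : EReal} : (x : EReal) - e = ⊤ ↔ e = ⊥ := by
  induction e using EReal.rec <;> simp [← EReal.coe_sub]

lemma erealToENNReal_lt_top {e : EReal} (h : e ≠ ⊤) : erealToENNReal e < ⊤ := by
  simp [erealToENNReal, h]

lemma psh_integrableOn {n : ℕ} {Ω : Set (Cn n)} {φ : Cn n → EReal}
    (hmeas : Measurable φ)
    (hsmv : ∀ a ∈ Ω, ∀ b : Cn n, ∀ r : ℝ, 0 < r →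
      (∀ lam : ℂ, ‖lam‖ ≤ r → a + lam • b ∈ Ω) →
      ∀ M : ℝ,
        (∀ θ : ℝ, φ (a + ((r : ℂ) * Complex.exp ((θ : ℂ) * Complex.I)) • b) ≤ (M : EReal)) →
        ∫⁻ θ in Set.Ioc (0 : ℝ) (2 * Real.pi),
            erealToENNReal ((M : EReal) - φ (a + ((r : ℂ) * Complex.exp ((θ : ℂ) * Complex.I)) • b))
          ≤ ENNReal.ofReal (2 * Real.pi) * erealToENNReal ((M : EReal) - φ a))
    {a : Cn n} {ρ M : ℝ} (hρ : 0 < ρ)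
    (hsub : ball a (3 * ρ) ⊆ Ω) (hM : ∀ x ∈ ball a (3 * ρ), φ x ≤ (M : EReal))
    {z0 : Cn n} (hz0 : z0 ∈ ball a ρ) (hz0b : φ z0 ≠ ⊥) :
    (∀ᵐ x ∂(volume.restrict (ball a ρ)), φ x ≠ ⊥) ∧
      IntegrableOn (fun x => (φ x).toReal) (ball a ρ) := by
  set F : Cn n → ℝ≥0∞ := fun x => erealToENNReal ((M : EReal) - φ x) with hF
  have hFmeas : Measurable F := (measurable_erealToENNRealSub M).comp hmeas
  have hz0Ω : z0 ∈ Ω := hsub (ball_subset_ball (by linarith) hz0)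
  have hbsub : ball z0 (2 * ρ) ⊆ ball a (3 * ρ) := by
    intro x hx
    rw [mem_ball] at hx ⊢
    calc dist x a ≤ dist x z0 + dist z0 a := dist_triangle _ _ _
      _ < 2 * ρ + ρ := add_lt_add hx (mem_ball.1 hz0)
      _ = 3 * ρ := by ring
  have hA := psh_ball_bound hmeas hsmv (by positivity : (0:ℝ) < 2 * ρ) hz0Ω
    (hbsub.trans hsub) (fun x hx => hM x (hbsub hx))
  have hGne : (M : EReal) - φ z0 ≠ ⊤ := fun h => hz0b (coe_sub_eq_top_iff.1 h)
  have hfin : (∫⁻ x in ball a ρ, F x) < ⊤ := by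
    have h1 : (∫⁻ x in ball a ρ, F x) ≤ ∫⁻ x in ball z0 (2 * ρ), F x :=
      lintegral_mono_set (fun x hx => by
        rw [mem_ball] at hx ⊢
        calc dist x z0 ≤ dist x a + dist a z0 := dist_triangle _ _ _
          _ < ρ + ρ := add_lt_add hx (by rw [dist_comm]; exact mem_ball.1 hz0)
          _ = 2 * ρ := by ring)
    refine h1.trans_lt ?_
    exact hA.trans_lt (ENNReal.mul_lt_top measure_ball_lt_top (erealToENNReal_lt_top hGne))
  have haebot : ∀ᵐ x ∂(volume.restrict (ball a ρ)), φ x ≠ ⊥ := by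
    filter_upwards [ae_lt_top hFmeas hfin.ne] with x hx
    intro hb
    rw [hF] at hx
    simp only [hb] at hx
    rw [show (M : EReal) - (⊥ : EReal) = ⊤ from coe_sub_eq_top_iff.2 rfl, erealToENNReal_top] at hx
    exact absurd hx (lt_irrefl _)
  refine ⟨haebot, ?_⟩
  have hMpt : ∀ᵐ x ∂(volume.restrict (ball a ρ)), φ x ≤ (M : EReal) :=
    (ae_restrict_iff' measurableSet_ball).2 (Filter.Eventually.of_forall
      (fun x hx => hM x (ball_subset_ball (by linarith) hx)))
  haveI : IsFiniteMeasure (volume.restrict (ball a ρ)) :=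
    ⟨by rw [Measure.restrict_apply_univ]; exact measure_ball_lt_top⟩
  have hFint : Integrable (fun x => (F x).toReal) (volume.restrict (ball a ρ)) :=
    integrable_toReal_of_lintegral_ne_top hFmeas.aemeasurable hfin.ne
  have : Integrable (fun x => M - (F x).toReal) (volume.restrict (ball a ρ)) :=
    (integrable_const M).sub hFint
  apply this.congr
  filter_upwards [haebot, hMpt] with x hxb hxM
  have hxt : φ x ≠ ⊤ := (hxM.trans_lt (EReal.coe_lt_top M)).ne
  have harg : (M : EReal) - φ x ≠ ⊤ := fun h => hxb (coe_sub_eq_top_iff.1 h)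
  have hFx : F x = ENNReal.ofReal (((M : EReal) - φ x).toReal) := by
    rw [hF]; simp [erealToENNReal, harg]
  have hsubR : ((M : EReal) - φ x).toReal = M - (φ x).toReal :=
    EReal.toReal_sub (EReal.coe_ne_top M) (EReal.coe_ne_bot M) hxt hxb
  have hnonneg : 0 ≤ M - (φ x).toReal := by
    have := EReal.toReal_le_toReal hxM hxb (EReal.coe_ne_top M)
    rw [EReal.toReal_coe] at this
    linarith
  rw [hFx, hsubR, ENNReal.toReal_ofReal hnonneg]
  ring

lemma MO_nonneg {n : ℕ} (φ : Cn n → EReal) (z : Cn n) (r : ℝ) : 0 ≤ MO φ z r := by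
  rw [MO, setAverage_eq, smul_eq_mul]
  apply mul_nonneg (by positivity)
  exact integral_nonneg (fun x => abs_nonneg _)

lemma ballAvg_diff_le {n : ℕ} {φ : Cn n → EReal} {a : Cn n} {ρ ρ' : ℝ}
    (hρ : 0 < ρ) (hle : ρ ≤ ρ')
    (hint : IntegrableOn (fun x => (φ x).toReal) (ball a ρ')) :
    |ballAvg φ a ρ - ballAvg φ a ρ'| ≤
      (ρ' / ρ) ^ (Module.finrank ℝ (Cn n)) * MO φ a ρ' := by
  set u : Cn n → ℝ := fun x => (φ x).toReal with hu
  set c := ballAvg φ a ρ' with hc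
  have h0' : (0 : ℝ) < ρ' := hρ.trans_le hle
  have hBB' : ball a ρ ⊆ ball a ρ' := ball_subset_ball hle
  have hvBpos : 0 < (volume (ball a ρ)).toReal :=
    ENNReal.toReal_pos (measure_ball_pos volume a hρ).ne' measure_ball_lt_top.ne
  have hvB'pos : 0 < (volume (ball a ρ')).toReal :=
    ENNReal.toReal_pos (measure_ball_pos volume a h0').ne' measure_ball_lt_top.ne
  have hintB : IntegrableOn u (ball a ρ) := hint.mono_set hBB'
  haveI : IsFiniteMeasure (volume.restrict (ball a ρ')) :=
    ⟨by rw [Measure.restrict_apply_univ]; exact measure_ball_lt_top⟩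
  haveI : IsFiniteMeasure (volume.restrict (ball a ρ)) :=
    ⟨by rw [Measure.restrict_apply_univ]; exact measure_ball_lt_top⟩
  have hsub' : IntegrableOn (fun x => u x - c) (ball a ρ') := hint.sub (integrable_const c)
  have habs' : IntegrableOn (fun x => |u x - c|) (ball a ρ') := hsub'.abs
  have hic : IntegrableOn (fun _ : Cn n => c) (ball a ρ) := integrable_const c
  have hsplit : ∫ x in ball a ρ, (u x - c) =
      (∫ x in ball a ρ, u x) - (volume (ball a ρ)).toReal * c := by
    rw [integral_sub hintB hic, setIntegral_const, smul_eq_mul, measureReal_def]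
  have hid : ballAvg φ a ρ - c =
      (volume (ball a ρ)).toReal⁻¹ * ∫ x in ball a ρ, (u x - c) := by
    rw [hsplit, mul_sub]
    have h2 : (volume (ball a ρ)).toReal⁻¹ * ((volume (ball a ρ)).toReal * c) = c := by
      field_simp
    rw [h2, ballAvg, setAverage_eq, smul_eq_mul, measureReal_def]
  have h1 : |ballAvg φ a ρ - c| ≤
      (volume (ball a ρ)).toReal⁻¹ * ∫ x in ball a ρ', |u x - c| := by
    rw [hid, abs_mul, abs_of_nonneg (inv_nonneg.2 ENNReal.toReal_nonneg)]
    apply mul_le_mul_of_nonneg_left _ (inv_nonneg.2 ENNReal.toReal_nonneg)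
    calc |∫ x in ball a ρ, (u x - c)| ≤ ∫ x in ball a ρ, |u x - c| := by
          simpa [Real.norm_eq_abs] using
            norm_integral_le_integral_norm (μ := volume.restrict (ball a ρ))
              (fun x => u x - c)
      _ ≤ ∫ x in ball a ρ', |u x - c| :=
          setIntegral_mono_set habs'
            (Filter.Eventually.of_forall fun x => abs_nonneg _)
            (HasSubset.Subset.eventuallyLE hBB')
  have hMOint : ∫ x in ball a ρ', |u x - c| = (volume (ball a ρ')).toReal * MO φ a ρ' := by
    rw [MO, setAverage_eq, smul_eq_mul, measureReal_def, ← mul_assoc, mul_inv_cancel₀ hvB'pos.ne', one_mul]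
  have hratio : (volume (ball a ρ)).toReal⁻¹ * (volume (ball a ρ')).toReal
      = (ρ' / ρ) ^ Module.finrank ℝ (Cn n) := by
    rw [Measure.addHaar_ball_of_pos volume a hρ, Measure.addHaar_ball_of_pos volume a h0']
    have hc1pos : 0 < (volume (ball (0 : Cn n) 1)).toReal :=
      ENNReal.toReal_pos (measure_ball_pos volume _ one_pos).ne' measure_ball_lt_top.ne
    rw [ENNReal.toReal_mul, ENNReal.toReal_mul,
      ENNReal.toReal_ofReal (pow_nonneg hρ.le _), ENNReal.toReal_ofReal (pow_nonneg h0'.le _),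
      div_pow]
    rw [mul_inv, mul_comm]
    field_simp
  calc |ballAvg φ a ρ - c|
      ≤ (volume (ball a ρ)).toReal⁻¹ * ((volume (ball a ρ')).toReal * MO φ a ρ') := by
        rw [← hMOint]; exact h1
    _ = (ρ' / ρ) ^ Module.finrank ℝ (Cn n) * MO φ a ρ' := by rw [← mul_assoc, hratio]

lemma tendsto_const_div_log (K : ℝ) :
    Tendsto (fun r : ℝ => K / Real.log r) (𝓝[>] (0:ℝ)) (𝓝 0) := by
  have h1 : Tendsto (fun r : ℝ => -Real.log r) (𝓝[>] (0:ℝ)) atTop :=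
    tendsto_neg_atBot_atTop.comp Real.tendsto_log_nhdsGT_zero
  have h2 : Tendsto (fun r : ℝ => (-Real.log r)⁻¹) (𝓝[>] (0:ℝ)) (𝓝 0) := h1.inv_tendsto_atTop
  have h3 := (h2.neg).const_mul K
  simp only [neg_zero, mul_zero] at h3
  apply h3.congr
  intro r
  rw [inv_neg, neg_neg, ← div_eq_mul_inv]

end AuxLemmas

set_option maxHeartbeats 2000000 in
/-- **Proposition.** Let `Ω ⊆ ℂⁿ` be a bounded domain and `φ` plurisubharmonic on `Ω`.
If `φ ∈ VMO(Ω)`, then the Lelong number `ν_φ(a)` vanishes at every `a ∈ Ω`. -/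
theorem lelong_eq_zero_of_isVMOOn (n : ℕ) (Ω : Set (Cn n)) (φ : Cn n → EReal)
    (hΩopen : IsOpen Ω) (hΩconn : IsConnected Ω) (hΩbdd : Bornology.IsBounded Ω)
    (hφ : IsPSHOn φ Ω) (hVMO : IsVMOOn φ Ω) :
    ∀ a ∈ Ω, lelong φ a = 0 := by
  intro a ha
  have hSmono : ∀ {r r' : ℝ}, r ≤ r' →
      (⨆ z ∈ ball a r, φ z) ≤ ⨆ z ∈ ball a r', φ z := fun {r r'} h =>
    iSup₂_le fun z hz => le_iSup₂ (f := fun z _ => φ z) z (ball_subset_ball h hz)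
  have key : Tendsto (fun r : ℝ => (⨆ z ∈ ball a r, φ z).toReal / Real.log r)
      (𝓝[>] (0:ℝ)) (𝓝 0) := by
    by_cases hbot : ∃ r : ℝ, 0 < r ∧ (⨆ z ∈ ball a r, φ z) = ⊥
    · obtain ⟨r0, hr0, hr0b⟩ := hbot
      apply Tendsto.congr' _ (tendsto_const_nhds (x := (0:ℝ)))
      filter_upwards [Ioo_mem_nhdsGT hr0] with r hr
      have hb : (⨆ z ∈ ball a r, φ z) = ⊥ := le_bot_iff.1 (hr0b ▸ hSmono hr.2.le)
      rw [hb]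
      simp
    push_neg at hbot
    by_cases htop : ∀ r : ℝ, 0 < r → (⨆ z ∈ ball a r, φ z) = ⊤
    · apply Tendsto.congr' _ (tendsto_const_nhds (x := (0:ℝ)))
      filter_upwards [self_mem_nhdsWithin] with r hr
      rw [htop r hr]
      simp
    push_neg at htop
    obtain ⟨r1, hr1pos, hr1top⟩ := htop
    classical
    rcases eq_or_ne n 0 with hn | hn
    · subst hn
      haveI : Subsingleton (Cn 0) := ⟨fun x y => by ext i; exact i.elim0⟩
      have hconst : ∀ r : ℝ, 0 < r → (⨆ z ∈ ball a r, φ z) = φ a := fun r hr =>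
        le_antisymm (iSup₂_le fun z _ => le_of_eq (by rw [Subsingleton.elim z a]))
          (le_iSup₂ (f := fun z _ => φ z) a (mem_ball_self hr))
      apply Tendsto.congr' _ (tendsto_const_div_log (φ a).toReal)
      filter_upwards [self_mem_nhdsWithin] with r hr
      rw [hconst r hr]
    -- main case
    haveI hfne : Nonempty (Fin n) := ⟨⟨0, Nat.pos_of_ne_zero hn⟩⟩
    haveI : Nontrivial (Cn n) := by
      refine ⟨EuclideanSpace.single ⟨0, Nat.pos_of_ne_zero hn⟩ (1:ℂ), 0, fun h => ?_⟩
      have h2 := congrArg (fun v : Cn n => v ⟨0, Nat.pos_of_ne_zero hn⟩) h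
      simp [EuclideanSpace.single_apply] at h2
    have hΩne : Ωᶜ.Nonempty := by
      by_contra h
      rw [Set.not_nonempty_iff_eq_empty, compl_empty_iff] at h
      exact NormedSpace.unbounded_univ ℝ (Cn n) (h ▸ hΩbdd)
    have hfrne : (frontier Ω).Nonempty := by
      rw [nonempty_frontier_iff]
      refine ⟨hΩconn.nonempty, fun h => NormedSpace.unbounded_univ ℝ (Cn n) (h ▸ hΩbdd)⟩
    set dΩ := infDist a Ωᶜ with hdΩdef
    have hdpos : 0 < dΩ :=
      (hΩopen.isClosed_compl.notMem_iff_infDist_pos hΩne).1 (fun h => h ha)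
    have hballΩ : ball a dΩ ⊆ Ω := by
      intro x hx
      by_contra hxΩ
      have h1 : dΩ ≤ dist a x := infDist_le_dist_of_mem hxΩ
      rw [dist_comm] at h1
      exact absurd (mem_ball.1 hx) (not_lt.2 h1)
    have hfle : dΩ ≤ infDist a (frontier Ω) :=
      infDist_le_infDist_of_subset
        (fun x hx => by rw [hΩopen.frontier_eq] at hx; exact hx.2) hfrne
    set M := (⨆ z ∈ ball a r1, φ z).toReal with hMdef
    have hMcoe : (M : EReal) = ⨆ z ∈ ball a r1, φ z := EReal.coe_toReal hr1top (hbot r1 hr1pos)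
    have hMbound : ∀ x ∈ ball a r1, φ x ≤ (M : EReal) := fun x hx => by
      rw [hMcoe]; exact le_iSup₂ (f := fun z _ => φ z) x hx
    set ψ : Cn n → EReal := fun x => if x ∈ Ω then φ x else ⊤ with hψdef
    have hψΩ : ∀ x ∈ Ω, ψ x = φ x := fun x hx => if_pos hx
    have husc : UpperSemicontinuous ψ := by
      intro x y hy
      by_cases hx : x ∈ Ω
      · rw [hψΩ x hx] at hy
        have hnb : 𝓝[Ω] x = 𝓝 x := nhdsWithin_eq_nhds.2 (hΩopen.mem_nhds hx)
        have h2 := hφ.1 x hx y hy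
        rw [hnb] at h2
        have h3 : ∀ᶠ z in 𝓝 x, z ∈ Ω := hΩopen.mem_nhds hx
        filter_upwards [h2, h3] with z hz1 hz2
        rwa [hψΩ z hz2]
      · have : ψ x = ⊤ := if_neg hx
        rw [this] at hy
        exact absurd hy not_top_lt
    have hψmeas : Measurable ψ := husc.measurable
    have hsmvψ : ∀ a' ∈ Ω, ∀ b : Cn n, ∀ r : ℝ, 0 < r →
        (∀ lam : ℂ, ‖lam‖ ≤ r → a' + lam • b ∈ Ω) → ∀ M' : ℝ,
        (∀ θ : ℝ, ψ (a' + ((r:ℂ) * Complex.exp ((θ:ℂ) * Complex.I)) • b) ≤ (M' : EReal)) →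
        (∫⁻ θ in Set.Ioc (0:ℝ) (2 * Real.pi),
            erealToENNReal ((M' : EReal) - ψ (a' + ((r:ℂ) * Complex.exp ((θ:ℂ) * Complex.I)) • b)))
          ≤ ENNReal.ofReal (2 * Real.pi) * erealToENNReal ((M' : EReal) - ψ a') := by
      intro a' ha' b r hr hdom M' hM'
      have hrw : ∀ θ : ℝ, ψ (a' + ((r:ℂ) * Complex.exp ((θ:ℂ) * Complex.I)) • b)
          = φ (a' + ((r:ℂ) * Complex.exp ((θ:ℂ) * Complex.I)) • b) := fun θ =>
        hψΩ _ (hdom _ (by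
          rw [norm_mul, Complex.norm_real, Complex.norm_exp_ofReal_mul_I, mul_one, Real.norm_of_nonneg hr.le]))
      simp only [hrw, hψΩ a' ha']
      exact hφ.2.2 a' ha' b r hr hdom M' (fun θ => by rw [← hrw θ]; exact hM' θ)
    rw [NormedAddCommGroup.tendsto_nhds_zero]
    intro ε hε
    have hlog2 : 0 < Real.log 2 := Real.log_pos one_lt_two
    set d := Module.finrank ℝ (Cn n) with hd
    set K : ℝ := 2 ^ d with hK
    have hK0 : (0:ℝ) < K := by positivity
    set εv : ℝ := (ε/2) * Real.log 2 / (2 * K) with hεv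
    have hεv0 : 0 < εv := div_pos (mul_pos (by linarith) hlog2) (by positivity)
    obtain ⟨δ, hδ0, hδ⟩ := hVMO.2 εv hεv0
    set ρ₀ : ℝ := min (min δ (dΩ/6)) (r1/3) with hρ₀def
    have hρ₀0 : 0 < ρ₀ := lt_min (lt_min hδ0 (by linarith)) (by linarith)
    have hρ₀δ : ρ₀ ≤ δ := (min_le_left _ _).trans (min_le_left _ _)
    have hρ₀d : ρ₀ ≤ dΩ/6 := (min_le_left _ _).trans (min_le_right _ _)
    have hρ₀r1 : ρ₀ ≤ r1/3 := min_le_right _ _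
    have hr1ρ₀ : ρ₀ ≤ r1 := hρ₀r1.trans (by linarith)
    have hadm : ∀ ρ : ℝ, 0 < ρ → ρ ≤ ρ₀ → MO φ a ρ < εv := by
      intro ρ h1 h2
      apply hδ a ha ρ h1
      apply le_min (h2.trans hρ₀δ)
      have h3 : ρ ≤ dΩ/6 := h2.trans hρ₀d
      linarith
    have hIntPair : ∀ ρ : ℝ, 0 < ρ → ρ ≤ ρ₀ →
        IntegrableOn (fun x => (φ x).toReal) (ball a ρ) ∧
          (∀ᵐ x ∂volume.restrict (ball a ρ), φ x ≠ ⊥) := by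
      intro ρ h1 h2
      have h3ρ : 3 * ρ ≤ dΩ/2 := by linarith [h2.trans hρ₀d]
      have hsub3 : ball a (3*ρ) ⊆ Ω :=
        (ball_subset_ball (by linarith)).trans hballΩ
      have hsubr1 : ball a (3*ρ) ⊆ ball a r1 := ball_subset_ball (by linarith [h2.trans hρ₀r1])
      have hMψ : ∀ x ∈ ball a (3*ρ), ψ x ≤ (M : EReal) := fun x hx => by
        rw [hψΩ x (hsub3 hx)]; exact hMbound x (hsubr1 hx)
      obtain ⟨z0, hz0mem, hz0b⟩ : ∃ z0 ∈ ball a ρ, φ z0 ≠ ⊥ := by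
        by_contra h
        push_neg at h
        exact hbot ρ h1 (le_bot_iff.1 (iSup₂_le fun z hz => (h z hz).le))
      have hballΩ' : ball a ρ ⊆ Ω := (ball_subset_ball (by linarith)).trans hsub3
      have hz0Ω : z0 ∈ Ω := hballΩ' hz0mem
      have hz0ψ : ψ z0 ≠ ⊥ := by rw [hψΩ z0 hz0Ω]; exact hz0b
      obtain ⟨hae, hint⟩ := psh_integrableOn hψmeas hsmvψ h1 hsub3 hMψ hz0mem hz0ψ
      constructor
      · apply hint.congr_fun (fun x hx => ?_) measurableSet_ball
        rw [hψΩ x (hballΩ' hx)]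
      · filter_upwards [hae, ae_restrict_mem measurableSet_ball] with x h1x h2x
        rw [← hψΩ x (hballΩ' h2x)]; exact h1x
    have hKεv : K * εv = ε * Real.log 2 / 4 := by
      rw [hεv]
      field_simp
      ring
    have hchain : ∀ k : ℕ, ballAvg φ a ρ₀ - ballAvg φ a (ρ₀ / 2^k) ≤ k * (K * εv) := by
      intro k
      induction k with
      | zero => simp
      | succ k ih =>
        have hk1 : (0:ℝ) < ρ₀ / 2^(k+1) := by positivity
        have hpk : (0:ℝ) < 2^k := by positivity
        have hkle : ρ₀ / 2^(k+1) ≤ ρ₀ / 2^k := by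
          apply div_le_div_of_nonneg_left hρ₀0.le hpk
          apply pow_le_pow_right₀ one_le_two (Nat.le_succ k)
        have hone : (1:ℝ) ≤ 2^k := one_le_pow₀ one_le_two
        have hkρ₀ : ρ₀ / 2^k ≤ ρ₀ := div_le_self hρ₀0.le hone
        have hint := (hIntPair (ρ₀/2^k) (by positivity) hkρ₀).1
        have hC := ballAvg_diff_le hk1 hkle hint
        have hr2 : (ρ₀ / 2^k) / (ρ₀ / 2^(k+1)) = 2 := by
          rw [pow_succ]
          field_simp
        rw [hr2] at hC
        have hMOk := hadm (ρ₀/2^k) (by positivity) hkρ₀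
        have hstep : |ballAvg φ a (ρ₀/2^(k+1)) - ballAvg φ a (ρ₀/2^k)| ≤ K * εv := by
          refine hC.trans ?_
          exact mul_le_mul_of_nonneg_left hMOk.le (by positivity)
        have hstep' : |ballAvg φ a (ρ₀/2^k) - ballAvg φ a (ρ₀/2^(k+1))| ≤ K * εv := by
          rwa [abs_sub_comm]
        have h3 := (abs_le.1 hstep').2
        have : ballAvg φ a ρ₀ - ballAvg φ a (ρ₀/2^(k+1))
            = (ballAvg φ a ρ₀ - ballAvg φ a (ρ₀/2^k))
              + (ballAvg φ a (ρ₀/2^k) - ballAvg φ a (ρ₀/2^(k+1))) := by ring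
        rw [this]
        push_cast
        calc (ballAvg φ a ρ₀ - ballAvg φ a (ρ₀/2^k))
              + (ballAvg φ a (ρ₀/2^k) - ballAvg φ a (ρ₀/2^(k+1)))
            ≤ k * (K * εv) + K * εv := add_le_add ih h3
          _ = ((k:ℝ) + 1) * (K * εv) := by ring
    have hA : ∀ ρ : ℝ, 0 < ρ → ρ ≤ ρ₀ →
        ballAvg φ a ρ₀ - ballAvg φ a ρ
          ≤ ((Real.log ρ₀ - Real.log ρ)/Real.log 2 + 2) * (K * εv) := by
      intro ρ h1 h2
      obtain ⟨k, hk1, hk2⟩ := exists_nat_pow_near ((one_le_div h1).2 h2) one_lt_two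
      have hpk : (0:ℝ) < 2^k := by positivity
      have hρ'1 : ρ ≤ ρ₀ / 2^k := by
        rw [le_div_iff₀ hpk]
        rw [le_div_iff₀ h1] at hk1
        linarith
      have hρ'2 : ρ₀ / 2^k ≤ 2 * ρ := by
        rw [div_le_iff₀ hpk]
        rw [div_lt_iff₀ h1] at hk2
        have h2' : (2:ℝ)^(k+1) = 2 * 2^k := by ring
        nlinarith
      have hone : (1:ℝ) ≤ 2^k := one_le_pow₀ one_le_two
      have hkρ₀ : ρ₀ / 2^k ≤ ρ₀ := div_le_self hρ₀0.le hone
      have hC := ballAvg_diff_le h1 hρ'1 ((hIntPair (ρ₀/2^k) (by positivity) hkρ₀).1)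
      have hMOk := hadm (ρ₀/2^k) (by positivity) hkρ₀
      have hratle : (ρ₀ / 2^k / ρ) ^ d ≤ K := by
        rw [hK]
        apply pow_le_pow_left₀ (by positivity)
        rw [div_le_iff₀ h1]
        linarith
      have hstep : |ballAvg φ a ρ - ballAvg φ a (ρ₀/2^k)| ≤ K * εv :=
        hC.trans (mul_le_mul hratle hMOk.le (MO_nonneg _ _ _) hK0.le)
      have hklog : (k : ℝ) ≤ (Real.log ρ₀ - Real.log ρ)/Real.log 2 := by
        rw [le_div_iff₀ hlog2]
        have h3 : Real.log ((2:ℝ)^k) ≤ Real.log (ρ₀/ρ) := Real.log_le_log (by positivity) hk1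
        rw [Real.log_pow, Real.log_div hρ₀0.ne' h1.ne'] at h3
        linarith
      have hh := abs_le.1 hstep
      have hfinal : ballAvg φ a ρ₀ - ballAvg φ a ρ ≤ ((k:ℝ) + 1) * (K * εv) := by
        have hck := hchain k
        have hexp : ((k:ℝ) + 1) * (K * εv) = k * (K * εv) + K * εv := by ring
        rw [hexp]
        linarith [hh.1]
      refine hfinal.trans ?_
      apply mul_le_mul_of_nonneg_right _ (mul_nonneg hK0.le hεv0.le)
      linarith
    have hSA : ∀ ρ : ℝ, 0 < ρ → ρ ≤ ρ₀ →
        ballAvg φ a ρ ≤ (⨆ z ∈ ball a ρ, φ z).toReal := by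
      intro ρ h1 h2
      obtain ⟨hint, hae⟩ := hIntPair ρ h1 h2
      haveI : IsFiniteMeasure (volume.restrict (ball a ρ)) :=
        ⟨by rw [Measure.restrict_apply_univ]; exact measure_ball_lt_top⟩
      have hSnetop : (⨆ z ∈ ball a ρ, φ z) ≠ ⊤ := by
        intro h
        exact hr1top (top_le_iff.1 (h ▸ hSmono (h2.trans hr1ρ₀)))
      have hle : ∀ᵐ x ∂volume.restrict (ball a ρ),
          (φ x).toReal ≤ (⨆ z ∈ ball a ρ, φ z).toReal := by
        filter_upwards [hae, ae_restrict_mem measurableSet_ball] with x hxb hxm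
        exact EReal.toReal_le_toReal (le_iSup₂ (f := fun z _ => φ z) x hxm) hxb hSnetop
      have hvpos : 0 < (volume (ball a ρ)).toReal :=
        ENNReal.toReal_pos (measure_ball_pos volume a h1).ne' measure_ball_lt_top.ne
      rw [ballAvg, setAverage_eq, smul_eq_mul, measureReal_def, inv_mul_le_iff₀ hvpos]
      calc ∫ x in ball a ρ, (φ x).toReal
          ≤ ∫ _x in ball a ρ, (⨆ z ∈ ball a ρ, φ z).toReal :=
            integral_mono_ae hint (integrable_const _) hle
        _ = (volume (ball a ρ)).toReal * (⨆ z ∈ ball a ρ, φ z).toReal := by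
            rw [setIntegral_const, smul_eq_mul, measureReal_def]
    set C₂ : ℝ := ballAvg φ a ρ₀ - (ε/4) * Real.log ρ₀ - (ε/2) * Real.log 2 with hC₂def
    have hlow : ∀ ρ : ℝ, 0 < ρ → ρ ≤ ρ₀ →
        C₂ + (ε/4) * Real.log ρ ≤ (⨆ z ∈ ball a ρ, φ z).toReal := by
      intro ρ h1 h2
      have h3 := hA ρ h1 h2
      have h4 := hSA ρ h1 h2
      rw [hKεv] at h3
      have h5 : ((Real.log ρ₀ - Real.log ρ)/Real.log 2 + 2) * (ε * Real.log 2/4)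
          = (ε/4) * Real.log ρ₀ - (ε/4) * Real.log ρ + (ε/2) * Real.log 2 := by
        field_simp
        ring
      rw [h5] at h3
      rw [hC₂def]
      linarith
    have hSfinR : ∀ ρ : ℝ, 0 < ρ → ρ ≤ ρ₀ → (⨆ z ∈ ball a ρ, φ z).toReal ≤ M :=
      fun ρ h1 h2 =>
        EReal.toReal_le_toReal (hSmono (h2.trans hr1ρ₀)) (hbot ρ h1) hr1top
    have hT1 := (tendsto_const_div_log M).eventually (Metric.ball_mem_nhds (0:ℝ) hε)
    have hT2 := (tendsto_const_div_log C₂).eventually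
      (Metric.ball_mem_nhds (0:ℝ) (show (0:ℝ) < ε/4 by linarith))
    filter_upwards [Ioo_mem_nhdsGT (lt_min hρ₀0 one_pos), hT1, hT2] with r hr h1 h2
    have hr0 : 0 < r := hr.1
    have hrρ₀ : r ≤ ρ₀ := le_of_lt (lt_of_lt_of_le hr.2 (min_le_left _ _))
    have hrlt1 : r < 1 := lt_of_lt_of_le hr.2 (min_le_right _ _)
    have hL : Real.log r < 0 := Real.log_neg hr0 hrlt1
    simp only [Metric.mem_ball, Real.dist_eq, sub_zero] at h1 h2
    set Sρ := (⨆ z ∈ ball a r, φ z).toReal with hSρdef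
    have hup : Sρ / Real.log r < ε := by
      have hlb := hlow r hr0 hrρ₀
      have hsplit : (C₂ + (ε/4) * Real.log r) / Real.log r = C₂ / Real.log r + ε/4 := by
        rw [add_div, mul_div_assoc, div_self hL.ne, mul_one]
      have hdiv : Sρ / Real.log r ≤ (C₂ + (ε/4) * Real.log r) / Real.log r :=
        div_le_div_of_nonpos_of_le hL.le hlb
      rw [hsplit] at hdiv
      have h6 := le_abs_self (C₂ / Real.log r)
      linarith
    have hdown : -ε < Sρ / Real.log r := by
      have hub := hSfinR r hr0 hrρ₀
      have hdiv : M / Real.log r ≤ Sρ / Real.log r :=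
        div_le_div_of_nonpos_of_le hL.le hub
      have h6 := neg_abs_le (M / Real.log r)
      linarith
    rw [Real.norm_eq_abs]
    exact abs_lt.2 ⟨hdown, hup⟩
  simp only [lelong]
  exact key.limUnder_eq
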